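/- Let n,k ≥ 1, let G be a finite abelian group of order k, and let φ : ℤ^n → G be a surjective group homomorphism. Then π(n,G,φ) ≥ f(n,k). -/

import Mathlib

open Set

/-- The Lee (Manhattan) distance between two words in `ℤ^n`. -/
def leeDist {n : ℕ} (v w : Fin n → ℤ) : ℕ := ∑ i, (v i - w i).natAbs

/-- The Lee sphere `S_{n,r}` of radius `r` centered at the origin. -/
def leeSphere (n r : ℕ) : Set (Fin n → ℤ) := {x | leeDist x 0 ≤ r}

/-- `|S_{n,r}|`, the cardinality of the Lee sphere. -/
noncomputable def sphereCard (n r : ℕ) : ℕ := (leeSphere n r).ncard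

/-- `π(n,G,φ,g)`: the minimum Lee distance from the origin of a preimage of `g` under `φ`. -/
noncomputable def piMinDist {n : ℕ} {G : Type*} [AddCommGroup G]
    (φ : (Fin n → ℤ) →+ G) (g : G) : ℕ :=
  sInf {d | ∃ x : Fin n → ℤ, φ x = g ∧ leeDist x 0 = d}

/-- `π(n,G,φ) = ∑_{g ∈ G} π(n,G,φ,g)`. -/
noncomputable def piEmbed {n : ℕ} {G : Type*} [AddCommGroup G] [Fintype G]
    (φ : (Fin n → ℤ) →+ G) : ℕ :=
  ∑ g : G, piMinDist φ g

/-- `f(n,k) = ∑_{i=1}^r i(|S_{n,i}| − |S_{n,i−1}|) + (r+1)(k − |S_{n,r}|)`,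
where `r` is the unique integer with `|S_{n,r}| ≤ k < |S_{n,r+1}|`. -/
noncomputable def fnk (n k r : ℕ) : ℕ :=
  (∑ i ∈ Finset.Icc 1 r, i * (sphereCard n i - sphereCard n (i - 1)))
    + (r + 1) * (k - sphereCard n r)

lemma leeSphere_finite (n i : ℕ) : (leeSphere n i).Finite := by
  apply Set.Finite.subset (Set.Finite.pi (fun j : Fin n => Set.finite_Icc (-(i:ℤ)) i))
  intro x hx
  simp only [Set.mem_pi, Set.mem_univ, Set.mem_Icc, forall_true_left]
  intro j
  have hj : (x j - 0).natAbs ≤ i :=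
    le_trans (Finset.single_le_sum (f := fun j => (x j - 0).natAbs)
      (fun _ _ => Nat.zero_le _) (Finset.mem_univ j)) hx
  omega

lemma sphereCard_mono (n : ℕ) {i j : ℕ} (h : i ≤ j) : sphereCard n i ≤ sphereCard n j := by
  apply Set.ncard_le_ncard _ (leeSphere_finite n j)
  intro x hx; exact le_trans hx h

lemma filter_card_le (n i : ℕ) (T : Finset (Fin n → ℤ)) :
    (T.filter (fun x => leeDist x 0 ≤ i)).card ≤ sphereCard n i := by
  rw [sphereCard, ← Set.ncard_coe_finset]
  apply Set.ncard_le_ncard _ (leeSphere_finite n i)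
  intro x hx
  simp only [Finset.coe_filter, Set.mem_setOf_eq] at hx
  exact hx.2

lemma fnk_eq (n k : ℕ) : ∀ r : ℕ, sphereCard n r ≤ k →
    fnk n k r = ∑ i ∈ Finset.range (r + 1), (k - sphereCard n i) := by
  intro r
  induction r with
  | zero => intro _; simp [fnk]
  | succ r ih =>
    intro hb
    have ha : sphereCard n r ≤ k := le_trans (sphereCard_mono n (Nat.le_succ r)) hb
    have hab : sphereCard n r ≤ sphereCard n (r + 1) := sphereCard_mono n (Nat.le_succ r)
    have e2 : sphereCard n (r + 1) - sphereCard n r + (k - sphereCard n (r + 1))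
        = k - sphereCard n r := by omega
    have key : (r + 1) * (sphereCard n (r + 1) - sphereCard n r)
          + (r + 1 + 1) * (k - sphereCard n (r + 1))
        = (r + 1) * (k - sphereCard n r) + (k - sphereCard n (r + 1)) := by
      rw [Nat.succ_mul (r + 1), ← add_assoc, ← Nat.mul_add, e2]
    rw [Finset.sum_range_succ, ← ih ha]
    unfold fnk
    rw [Finset.sum_Icc_succ_top (by omega : 1 ≤ r + 1)]
    simp only [Nat.add_sub_cancel]
    omega

lemma sum_dist_ge (n k r : ℕ) (T : Finset (Fin n → ℤ)) (hT : T.card = k)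
    (hr₁ : sphereCard n r ≤ k) :
    fnk n k r ≤ ∑ x ∈ T, leeDist x 0 := by
  rw [fnk_eq n k r hr₁]
  calc ∑ i ∈ Finset.range (r + 1), (k - sphereCard n i)
      ≤ ∑ i ∈ Finset.range (r + 1), (T.filter (fun x => ¬ leeDist x 0 ≤ i)).card := by
        apply Finset.sum_le_sum
        intro i _
        have h1 := filter_card_le n i T
        have h2 := Finset.card_filter_add_card_filter_not
          (s := T) (p := fun x => leeDist x 0 ≤ i)
        rw [hT] at h2
        omega
    _ = ∑ i ∈ Finset.range (r + 1), ∑ x ∈ T, (if ¬ leeDist x 0 ≤ i then 1 else 0) := by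
        exact Finset.sum_congr rfl fun i _ => Finset.card_filter _ _
    _ = ∑ x ∈ T, ∑ i ∈ Finset.range (r + 1), (if ¬ leeDist x 0 ≤ i then 1 else 0) :=
        Finset.sum_comm
    _ ≤ ∑ x ∈ T, leeDist x 0 := by
        apply Finset.sum_le_sum
        intro x _
        rw [← Finset.card_filter]
        have hsub : (Finset.range (r + 1)).filter (fun i => ¬ leeDist x 0 ≤ i)
            ⊆ Finset.range (leeDist x 0) := by
          intro i hi
          simp only [Finset.mem_filter, Finset.mem_range, not_le] at hi ⊢
          exact hi.2
        simpa using Finset.card_le_card hsub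

theorem embedding_number_lower_bound
    (n k : ℕ) (hn : 1 ≤ n) (hk : 1 ≤ k)
    (G : Type) [AddCommGroup G] [Fintype G] (hG : Nat.card G = k)
    (φ : (Fin n → ℤ) →+ G) (hφ : Function.Surjective φ)
    (r : ℕ) (hr₁ : sphereCard n r ≤ k) (hr₂ : k < sphereCard n (r + 1)) :
    fnk n k r ≤ piEmbed φ := by
  classical
  have hmem : ∀ g : G, ∃ x : Fin n → ℤ, φ x = g ∧ leeDist x 0 = piMinDist φ g := by
    intro g
    have hne : {d | ∃ x : Fin n → ℤ, φ x = g ∧ leeDist x 0 = d}.Nonempty := by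
      obtain ⟨x, hx⟩ := hφ g
      exact ⟨leeDist x 0, x, hx, rfl⟩
    exact Nat.sInf_mem hne
  choose x hx1 hx2 using hmem
  have hinj : Function.Injective x := by
    intro g₁ g₂ h
    rw [← hx1 g₁, ← hx1 g₂, h]
  set T : Finset (Fin n → ℤ) := Finset.univ.image x with hTdef
  have hTcard : T.card = k := by
    rw [hTdef, Finset.card_image_of_injective _ hinj, Finset.card_univ,
      ← Nat.card_eq_fintype_card, hG]
  have hsum : ∑ y ∈ T, leeDist y 0 = piEmbed φ := by
    rw [hTdef, Finset.sum_image (fun g₁ _ g₂ _ h => hinj h)]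
    unfold piEmbed
    exact Finset.sum_congr rfl (fun g _ => hx2 g)
  rw [← hsum]
  exact sum_dist_ge n k r T hTcard hr₁
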